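/- Let O be a positive semidefinite real d×d matrix satisfying the Lyapunov equation Aᵀ O + O A + Nᵀ O N + Cᵀ C = 0 for matrices A, N ∈ ℝ^{d×d} and C ∈ ℝ^{m×d}. Then N(ker O) ⊆ ker O, A(ker O) ⊆ ker O, and ker(O) ⊆ ker(C). -/

import Mathlib

open Matrix

/-- If a positive semidefinite `O` satisfies the observability Lyapunov equation
`Aᵀ O + O A + Nᵀ O N + Cᵀ C = 0`, then `ker O` is invariant under `A` and `N`
and is contained in `ker C`. -/
theorem kernel_invariance_observability_lyapunov
    {d m : ℕ} (A N O : Matrix (Fin d) (Fin d) ℝ) (C : Matrix (Fin m) (Fin d) ℝ)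
    (hO : O.PosSemidef)
    (hLyap : Aᵀ * O + O * A + Nᵀ * O * N + Cᵀ * C = 0) :
    (∀ x : Fin d → ℝ, O.mulVec x = 0 → O.mulVec (N.mulVec x) = 0) ∧
    (∀ x : Fin d → ℝ, O.mulVec x = 0 → O.mulVec (A.mulVec x) = 0) ∧
    (∀ x : Fin d → ℝ, O.mulVec x = 0 → C.mulVec x = 0) := by
  have key : ∀ x : Fin d → ℝ, O.mulVec x = 0 →
      O.mulVec (N.mulVec x) = 0 ∧ C.mulVec x = 0 := by
    intro x hx
    have h1 : x ⬝ᵥ ((Aᵀ * O + O * A + Nᵀ * O * N + Cᵀ * C) *ᵥ x) = 0 := by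
      rw [hLyap, Matrix.zero_mulVec, dotProduct_zero]
    have e1 : x ⬝ᵥ (Aᵀ * O) *ᵥ x = 0 := by
      rw [← Matrix.mulVec_mulVec, hx, Matrix.mulVec_zero, dotProduct_zero]
    have hsymm : Oᵀ = O := hO.1
    have e2 : x ⬝ᵥ (O * A) *ᵥ x = 0 := by
      rw [dotProduct_mulVec, ← Matrix.vecMul_vecMul, ← hsymm, Matrix.vecMul_transpose,
        hx, Matrix.zero_vecMul, zero_dotProduct]
    have e3 : x ⬝ᵥ (Nᵀ * O * N) *ᵥ x = (N *ᵥ x) ⬝ᵥ (O *ᵥ (N *ᵥ x)) := by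
      rw [← Matrix.mulVec_mulVec, ← Matrix.mulVec_mulVec, dotProduct_mulVec,
        Matrix.vecMul_transpose]
    have e4 : x ⬝ᵥ (Cᵀ * C) *ᵥ x = (C *ᵥ x) ⬝ᵥ (C *ᵥ x) := by
      rw [← Matrix.mulVec_mulVec, dotProduct_mulVec, Matrix.vecMul_transpose]
    rw [Matrix.add_mulVec, Matrix.add_mulVec, Matrix.add_mulVec, dotProduct_add,
      dotProduct_add, dotProduct_add, e1, e2, e3, e4, zero_add, zero_add] at h1
    have hn : (0:ℝ) ≤ (N *ᵥ x) ⬝ᵥ (O *ᵥ (N *ᵥ x)) := by simpa using hO.dotProduct_mulVec_nonneg (N *ᵥ x)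
    have hc : (0:ℝ) ≤ (C *ᵥ x) ⬝ᵥ (C *ᵥ x) :=
      Finset.sum_nonneg fun i _ => mul_self_nonneg _
    have hn0 : (N *ᵥ x) ⬝ᵥ (O *ᵥ (N *ᵥ x)) = 0 := by linarith
    have hc0 : (C *ᵥ x) ⬝ᵥ (C *ᵥ x) = 0 := by linarith
    constructor
    · have := (hO.dotProduct_mulVec_zero_iff (N *ᵥ x)).mp (by simpa using hn0)
      exact this
    · exact dotProduct_self_eq_zero.mp hc0
  refine ⟨fun x hx => (key x hx).1, ?_, fun x hx => (key x hx).2⟩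
  intro x hx
  have h2 : (Aᵀ * O + O * A + Nᵀ * O * N + Cᵀ * C) *ᵥ x = 0 := by
    rw [hLyap, Matrix.zero_mulVec]
  have hN := (key x hx).1
  have hC := (key x hx).2
  have hexp : (Aᵀ * O + O * A + Nᵀ * O * N + Cᵀ * C) *ᵥ x
      = Aᵀ *ᵥ (O *ᵥ x) + O *ᵥ (A *ᵥ x) + Nᵀ *ᵥ (O *ᵥ (N *ᵥ x)) + Cᵀ *ᵥ (C *ᵥ x) := by
    simp only [Matrix.add_mulVec, Matrix.mulVec_mulVec, Matrix.mul_assoc]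
  rw [hexp, hx, hN, hC] at h2
  simpa using h2
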